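/- arXiv:2403.02949 — 3 statements merged into one kernel-verified Lean document; each statement's English description precedes it below -/
import Mathlib

section
/- Generalised Hansen–Bessel formula: for every integer n and every nonzero complex number z (identified with the planar vector x = (Re z, Im z)), one has (1/(2π)) ∫_0^{2π} e^{i n φ} · exp(i·(cos(φ+π/2)·Re z + sin(φ+π/2)·Im z)) dφ = J_n(|z|) · (z/|z|)^n, where (z/|z|)^n = e^{i n arg z}. -/
/-- Bessel function of the first kind of integer order `n`, defined via the
Hansen--Bessel formula. -/
noncomputable def besselJ (n : ℤ) (r : ℝ) : ℝ :=
  ((2 * Real.pi : ℂ)⁻¹ * ∫ θ in (0:ℝ)..(2 * Real.pi),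
    Complex.exp (Complex.I * ((r * Real.cos θ - (n : ℝ) * (θ + Real.pi / 2) : ℝ) : ℂ))).re

lemma hansen_intervalIntegral_conj (f : ℝ → ℂ) (a b : ℝ) :
    ∫ x in a..b, (starRingEnd ℂ) (f x) = (starRingEnd ℂ) (∫ x in a..b, f x) := by
  simp [intervalIntegral, ← integral_conj]

lemma hansen_exp_I_int_two_pi (n : ℤ) :
    Complex.exp (Complex.I * (n : ℂ) * ((2 * Real.pi : ℝ) : ℂ)) = 1 := by
  rw [show Complex.I * (n : ℂ) * ((2 * Real.pi : ℝ) : ℂ)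
      = (n : ℂ) * (2 * (Real.pi : ℂ) * Complex.I) by push_cast; ring]
  exact Complex.exp_int_mul_two_pi_mul_I n

/-- Generalised Hansen--Bessel formula. -/
theorem generalized_hansen_bessel (n : ℤ) (z : ℂ) (hz : z ≠ 0) :
    (2 * Real.pi : ℂ)⁻¹ * ∫ φ in (0:ℝ)..(2 * Real.pi),
        Complex.exp (Complex.I * (n : ℂ) * (φ : ℂ)) *
          Complex.exp (Complex.I * ((Real.cos (φ + Real.pi / 2) * z.re +
            Real.sin (φ + Real.pi / 2) * z.im : ℝ) : ℂ))
      = (besselJ n ‖z‖ : ℂ) * (z / (‖z‖ : ℂ)) ^ n := by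
  set r : ℝ := ‖z‖ with hr
  have hr0 : r ≠ 0 := by
    simpa [hr] using (norm_ne_zero_iff).mpr hz
  set α : ℝ := z.arg with hα
  set g : ℝ → ℂ := fun u => Complex.exp (Complex.I * r * Real.cos u + Complex.I * n * u)
    with hgdef
  have hper : Function.Periodic g (2 * Real.pi) := by
    intro u
    have h1 : Complex.I * (r : ℂ) * ((Real.cos (u + 2 * Real.pi) : ℝ) : ℂ)
        + Complex.I * (n : ℂ) * ((u + 2 * Real.pi : ℝ) : ℂ)
        = (Complex.I * r * Real.cos u + Complex.I * n * u)
          + Complex.I * (n : ℂ) * ((2 * Real.pi : ℝ) : ℂ) := by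
      rw [Real.cos_add_two_pi]; push_cast; ring
    show Complex.exp (Complex.I * r * Real.cos (u + 2*Real.pi) + Complex.I * n * ((u + 2*Real.pi : ℝ) : ℂ)) = _
    rw [h1, Complex.exp_add, hansen_exp_I_int_two_pi, mul_one]
  set G : ℂ := ∫ u in (0:ℝ)..(2 * Real.pi), g u with hG
  -- the Bessel integral
  set B : ℂ := ∫ θ in (0:ℝ)..(2 * Real.pi),
      Complex.exp (Complex.I * ((r * Real.cos θ - (n : ℝ) * (θ + Real.pi / 2) : ℝ) : ℂ)) with hB
  have keyB : B = Complex.exp (-(Complex.I * n * (Real.pi / 2))) * G := by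
    have step : ∀ θ : ℝ,
        Complex.exp (Complex.I * ((r * Real.cos θ - (n : ℝ) * (θ + Real.pi / 2) : ℝ) : ℂ))
        = Complex.exp (-(Complex.I * n * (Real.pi / 2))) * g (-θ) := by
      intro θ
      simp only [hgdef]
      rw [← Complex.exp_add]
      congr 1
      rw [Real.cos_neg]
      push_cast
      ring
    rw [hB]
    calc (∫ θ in (0:ℝ)..(2 * Real.pi),
            Complex.exp (Complex.I * ((r * Real.cos θ - (n : ℝ) * (θ + Real.pi / 2) : ℝ) : ℂ)))
        = ∫ θ in (0:ℝ)..(2 * Real.pi), Complex.exp (-(Complex.I * n * (Real.pi / 2))) * g (-θ) := by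
          simp only [step]
      _ = Complex.exp (-(Complex.I * n * (Real.pi / 2))) * ∫ θ in (0:ℝ)..(2 * Real.pi), g (-θ) :=
          intervalIntegral.integral_const_mul _ _
      _ = Complex.exp (-(Complex.I * n * (Real.pi / 2))) * ∫ u in (-(2 * Real.pi))..(-(0:ℝ)), g u := by
          rw [intervalIntegral.integral_comp_neg]
      _ = Complex.exp (-(Complex.I * n * (Real.pi / 2))) * G := by
          rw [hG, show (-(0:ℝ)) = -(2*Real.pi) + 2*Real.pi by ring,
            hper.intervalIntegral_add_eq (-(2*Real.pi)) 0, zero_add]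
  -- the left-hand integral
  have keyL : (∫ φ in (0:ℝ)..(2 * Real.pi),
        Complex.exp (Complex.I * (n : ℂ) * (φ : ℂ)) *
          Complex.exp (Complex.I * ((Real.cos (φ + Real.pi / 2) * z.re +
            Real.sin (φ + Real.pi / 2) * z.im : ℝ) : ℂ)))
      = Complex.exp (Complex.I * n * α) * (Complex.exp (-(Complex.I * n * (Real.pi / 2))) * G) := by
    have hre : z.re = r * Real.cos α := by
      rw [hα, Complex.cos_arg hz, ← hr]; field_simp
    have him : z.im = r * Real.sin α := by
      rw [hα, Complex.sin_arg, ← hr]; field_simp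
    have step : ∀ φ : ℝ,
        Complex.exp (Complex.I * (n : ℂ) * (φ : ℂ)) *
          Complex.exp (Complex.I * ((Real.cos (φ + Real.pi / 2) * z.re +
            Real.sin (φ + Real.pi / 2) * z.im : ℝ) : ℂ))
        = (Complex.exp (Complex.I * n * α) * Complex.exp (-(Complex.I * n * (Real.pi / 2))))
            * g (φ + (Real.pi / 2 - α)) := by
      intro φ
      simp only [hgdef]
      rw [← Complex.exp_add, ← Complex.exp_add, ← Complex.exp_add]
      congr 1
      have hcos : Real.cos (φ + (Real.pi / 2 - α))
          = Real.cos (φ + Real.pi / 2) * Real.cos α + Real.sin (φ + Real.pi / 2) * Real.sin α := by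
        rw [show φ + (Real.pi / 2 - α) = (φ + Real.pi / 2) - α by ring, Real.cos_sub]
      rw [hcos, hre, him]
      push_cast
      ring
    calc (∫ φ in (0:ℝ)..(2 * Real.pi),
          Complex.exp (Complex.I * (n : ℂ) * (φ : ℂ)) *
            Complex.exp (Complex.I * ((Real.cos (φ + Real.pi / 2) * z.re +
              Real.sin (φ + Real.pi / 2) * z.im : ℝ) : ℂ)))
        = ∫ φ in (0:ℝ)..(2 * Real.pi),
            (Complex.exp (Complex.I * n * α) * Complex.exp (-(Complex.I * n * (Real.pi / 2))))
              * g (φ + (Real.pi / 2 - α)) := by simp only [step]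
      _ = (Complex.exp (Complex.I * n * α) * Complex.exp (-(Complex.I * n * (Real.pi / 2))))
            * ∫ φ in (0:ℝ)..(2 * Real.pi), g (φ + (Real.pi / 2 - α)) :=
          intervalIntegral.integral_const_mul _ _
      _ = (Complex.exp (Complex.I * n * α) * Complex.exp (-(Complex.I * n * (Real.pi / 2))))
            * ∫ u in ((0:ℝ) + (Real.pi / 2 - α))..(2 * Real.pi + (Real.pi / 2 - α)), g u := by
          rw [intervalIntegral.integral_comp_add_right]
      _ = Complex.exp (Complex.I * n * α) * (Complex.exp (-(Complex.I * n * (Real.pi / 2))) * G) := by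
          rw [show (2 * Real.pi + (Real.pi / 2 - α)) = ((0:ℝ) + (Real.pi / 2 - α)) + 2 * Real.pi by ring,
            hper.intervalIntegral_add_eq ((0:ℝ) + (Real.pi / 2 - α)) 0, zero_add, ← hG, mul_assoc]
  -- B is real
  have hBconj : (starRingEnd ℂ) B = B := by
    set h : ℝ → ℂ := fun θ =>
      Complex.exp (-(Complex.I * ((r * Real.cos θ - (n : ℝ) * (θ + Real.pi / 2) : ℝ) : ℂ)))
      with hhdef
    have hconj : (starRingEnd ℂ) B = ∫ θ in (0:ℝ)..(2 * Real.pi), h θ := by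
      rw [hB, ← hansen_intervalIntegral_conj]
      refine intervalIntegral.integral_congr fun θ _ => ?_
      rw [← Complex.exp_conj]
      congr 1
      rw [map_mul, Complex.conj_I, Complex.conj_ofReal]
      ring
    have hper2 : Function.Periodic h (2 * Real.pi) := by
      intro θ
      show Complex.exp _ = Complex.exp _
      calc Complex.exp (-(Complex.I * ((r * Real.cos (θ + 2*Real.pi) - (n : ℝ) * ((θ + 2*Real.pi) + Real.pi / 2) : ℝ) : ℂ)))
          = Complex.exp (-(Complex.I * ((r * Real.cos θ - (n : ℝ) * (θ + Real.pi / 2) : ℝ) : ℂ))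
              + Complex.I * (n : ℂ) * ((2 * Real.pi : ℝ) : ℂ)) := by
            congr 1
            rw [Real.cos_add_two_pi]
            push_cast; ring
        _ = h θ := by rw [Complex.exp_add, hansen_exp_I_int_two_pi, mul_one]
    have step2 : ∀ θ : ℝ, h (θ + Real.pi)
        = Complex.exp (-(Complex.I * n * (Real.pi / 2))) * g θ := by
      intro θ
      show Complex.exp _ = _
      calc Complex.exp (-(Complex.I * ((r * Real.cos (θ + Real.pi) - (n : ℝ) * ((θ + Real.pi) + Real.pi / 2) : ℝ) : ℂ)))
          = Complex.exp ((-(Complex.I * n * (Real.pi / 2))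
              + (Complex.I * r * Real.cos θ + Complex.I * n * θ))
              + Complex.I * (n : ℂ) * ((2 * Real.pi : ℝ) : ℂ)) := by
            congr 1
            rw [Real.cos_add_pi]
            push_cast; ring
        _ = Complex.exp (-(Complex.I * n * (Real.pi / 2))) * g θ := by
            rw [Complex.exp_add, hansen_exp_I_int_two_pi, mul_one, Complex.exp_add]
    calc (starRingEnd ℂ) B = ∫ θ in (0:ℝ)..(2 * Real.pi), h θ := hconj
      _ = ∫ θ in (0:ℝ)..(0 + 2 * Real.pi), h θ := by rw [zero_add]
      _ = ∫ θ in (Real.pi)..(Real.pi + 2 * Real.pi), h θ := hper2.intervalIntegral_add_eq 0 Real.pi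
      _ = ∫ θ in ((0:ℝ) + Real.pi)..(2 * Real.pi + Real.pi), h θ := by norm_num [add_comm]
      _ = ∫ θ in (0:ℝ)..(2 * Real.pi), h (θ + Real.pi) :=
          (intervalIntegral.integral_comp_add_right h Real.pi).symm
      _ = ∫ θ in (0:ℝ)..(2 * Real.pi),
            Complex.exp (-(Complex.I * n * (Real.pi / 2))) * g θ := by simp only [step2]
      _ = Complex.exp (-(Complex.I * n * (Real.pi / 2))) * G :=
          intervalIntegral.integral_const_mul _ _
      _ = B := keyB.symm
    -- assemble
  have hBre : ((B.re : ℝ) : ℂ) = B := Complex.conj_eq_iff_re.mp hBconj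
  have hbessel : ((besselJ n r : ℝ) : ℂ) = (2 * Real.pi : ℂ)⁻¹ * B := by
    rw [besselJ, ← hB]
    rw [show ((2 * Real.pi : ℂ))⁻¹ = (((2 * Real.pi)⁻¹ : ℝ) : ℂ) by push_cast; ring]
    rw [show ((((2 * Real.pi)⁻¹ : ℝ) : ℂ) * B).re = (2 * Real.pi)⁻¹ * B.re by
      simp [Complex.re_ofReal_mul]]
    push_cast
    rw [hBre]
  have hrc : (r : ℂ) ≠ 0 := Complex.ofReal_ne_zero.mpr hr0
  have hzr : z / (r : ℂ) = Complex.exp ((α : ℂ) * Complex.I) := by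
    rw [div_eq_iff hrc, ← Complex.norm_mul_exp_arg_mul_I z, ← hr, ← hα]
    ring
  have hpow : (z / (r : ℂ)) ^ n = Complex.exp (Complex.I * n * α) := by
    rw [hzr, ← Complex.exp_int_mul]
    congr 1
    ring
  rw [keyL, ← keyB, hpow, hbessel]
  ring
end

section
/- Hexagon quadratic identity (second identity of the hexagon proposition): for every integer n there exists a real constant c (depending only on n) such that for every real r, Σ_{i+j=n} J_{3i}(r) J_{−3j}(r) = (1/3)·δ_{n,0} + c·J_{3n}(√3·r), where δ_{n,0} = 1 if n = 0 and 0 otherwise. In particular, the convolutional sum differs from (1/3)δ_{n,0} only by a term oscillating with the irrational frequency √3. -/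
open Complex MeasureTheory Function intervalIntegral
open scoped Real ComplexConjugate

noncomputable section Hex

lemma intervalIntegral_conj' {f : ℝ → ℂ} {a b : ℝ} :
    (∫ x in a..b, (starRingEnd ℂ) (f x)) = (starRingEnd ℂ) (∫ x in a..b, f x) := by
  simp only [intervalIntegral, integral_conj, map_sub]

/-- The basic integrand. -/
def hexg (ρ : ℝ) (q : ℤ) (θ : ℝ) : ℂ :=
  Complex.exp (Complex.I * ((ρ : ℂ) * (Real.cos θ : ℂ) + (q : ℂ) * (θ : ℂ)))

lemma hexg_cont (ρ : ℝ) (q : ℤ) : Continuous (hexg ρ q) := by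
  apply Complex.continuous_exp.comp
  fun_prop

lemma hexg_per (ρ : ℝ) (q : ℤ) : Periodic (hexg ρ q) (2 * Real.pi) := by
  intro θ
  unfold hexg
  rw [show Complex.I * ((ρ : ℂ) * (Real.cos (θ + 2*Real.pi) : ℂ) + (q : ℂ) * ((θ + 2*Real.pi : ℝ) : ℂ))
      = Complex.I * ((ρ : ℂ) * (Real.cos θ : ℂ) + (q : ℂ) * (θ : ℂ)) + (q : ℂ) * (2 * (Real.pi:ℂ) * Complex.I) by
    rw [Real.cos_add_two_pi]; push_cast; ring]
  rw [Complex.exp_add, Complex.exp_int_mul_two_pi_mul_I, mul_one]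

def hexK (ρ : ℝ) (q : ℤ) : ℂ := ∫ θ in (0:ℝ)..(2*Real.pi), hexg ρ q θ

lemma hexK_shift (ρ : ℝ) (q : ℤ) (a : ℝ) :
    (∫ θ in (0:ℝ)..(2*Real.pi), hexg ρ q (θ + a)) = hexK ρ q := by
  rw [intervalIntegral.integral_comp_add_right (hexg ρ q) a, zero_add]
  have := (hexg_per ρ q).intervalIntegral_add_eq a 0
  rw [add_comm (2*Real.pi) a]
  simpa [hexK] using this

lemma hexK_neg_arg (ρ : ℝ) (q : ℤ) :
    (∫ θ in (0:ℝ)..(2*Real.pi), hexg ρ q (-θ)) = hexK ρ q := by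
  rw [intervalIntegral.integral_comp_neg (hexg ρ q), neg_zero]
  have := (hexg_per ρ q).intervalIntegral_add_eq (-(2*Real.pi)) 0
  simpa [hexK] using this

lemma hexK_negq (ρ : ℝ) (q : ℤ) : hexK ρ (-q) = hexK ρ q := by
  rw [← hexK_neg_arg ρ q]
  apply intervalIntegral.integral_congr
  intro θ _
  unfold hexg
  congr 1
  rw [Real.cos_neg]
  push_cast
  ring

lemma hexK_negρ (ρ : ℝ) (q : ℤ) :
    hexK (-ρ) q = Complex.exp (-(Complex.I * q * Real.pi)) * hexK ρ q := by
  have h1 : ∀ θ : ℝ, hexg (-ρ) q θ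
      = Complex.exp (-(Complex.I * q * Real.pi)) * hexg ρ q (θ + Real.pi) := by
    intro θ
    unfold hexg
    rw [← Complex.exp_add]
    congr 1
    rw [Real.cos_add_pi]
    push_cast
    ring
  have : hexK (-ρ) q = ∫ θ in (0:ℝ)..(2*Real.pi),
      Complex.exp (-(Complex.I * q * Real.pi)) * hexg ρ q (θ + Real.pi) := by
    unfold hexK; simp_rw [h1]
  rw [this, intervalIntegral.integral_const_mul, hexK_shift]

lemma hexK_conj (ρ : ℝ) (q : ℤ) :
    (starRingEnd ℂ) (hexK ρ q) = Complex.exp (-(Complex.I * q * Real.pi)) * hexK ρ q := by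
  have h1 : hexK (-ρ) (-q) = (starRingEnd ℂ) (hexK ρ q) := by
    unfold hexK
    rw [← intervalIntegral_conj']
    apply intervalIntegral.integral_congr
    intro θ _
    show hexg (-ρ) (-q) θ = (starRingEnd ℂ) (hexg ρ q θ)
    unfold hexg
    rw [← Complex.exp_conj]
    congr 1
    simp only [map_mul, map_add, Complex.conj_I, Complex.conj_ofReal, map_intCast]
    push_cast
    ring
  rw [← h1, hexK_negq, hexK_negρ]


lemma hexK_zero (q : ℤ) : hexK 0 q = if q = 0 then (2*Real.pi : ℂ) else 0 := by
  rcases eq_or_ne q 0 with h | h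
  · subst h
    unfold hexK hexg
    simp
  · rw [if_neg h]
    unfold hexK hexg
    have h2 : ∀ θ:ℝ, Complex.exp (Complex.I * (((0:ℝ):ℂ) * (Real.cos θ:ℂ) + (q:ℂ)*(θ:ℂ)))
        = Complex.exp ((Complex.I * q) * (θ:ℂ)) := by
      intro θ; congr 1; push_cast; ring
    simp_rw [h2]
    have hc : Complex.I * (q:ℂ) ≠ 0 := by
      simp [Complex.I_ne_zero, h]
    rw [integral_exp_mul_complex hc]
    rw [show Complex.I * (q:ℂ) * ((2*Real.pi:ℝ):ℂ) = (q:ℂ) * (2*(Real.pi:ℂ)*Complex.I) by push_cast; ring]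
    rw [Complex.exp_int_mul_two_pi_mul_I]
    simp

lemma besselJ_integral (m : ℤ) (ρ : ℝ) :
    (∫ θ in (0:ℝ)..(2*Real.pi),
      Complex.exp (Complex.I * ((ρ * Real.cos θ - (m:ℝ) * (θ + Real.pi/2) : ℝ) : ℂ)))
      = Complex.exp (-(Complex.I * m * (Real.pi/2))) * hexK ρ (-m) := by
  unfold hexK
  rw [← intervalIntegral.integral_const_mul]
  apply intervalIntegral.integral_congr
  intro θ _
  show Complex.exp (Complex.I * ((ρ * Real.cos θ - (m:ℝ) * (θ + Real.pi/2) : ℝ) : ℂ))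
      = Complex.exp (-(Complex.I * m * (Real.pi/2))) * hexg ρ (-m) θ
  unfold hexg
  rw [← Complex.exp_add]
  congr 1
  push_cast
  ring

lemma besselJ_eq_re (m : ℤ) (ρ : ℝ) :
    besselJ m ρ
      = (Complex.exp (-(Complex.I * m * (Real.pi/2))) * (2 * Real.pi : ℂ)⁻¹ * hexK ρ (-m)).re := by
  unfold besselJ
  rw [besselJ_integral, ← mul_assoc, mul_comm ((2 * Real.pi : ℂ))⁻¹]

lemma besselJ_complex (m : ℤ) (ρ : ℝ) :
    ((besselJ m ρ : ℝ) : ℂ)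
      = Complex.exp (-(Complex.I * m * (Real.pi/2))) * (2 * Real.pi : ℂ)⁻¹ * hexK ρ (-m) := by
  rw [besselJ_eq_re]
  apply Complex.conj_eq_iff_re.mp
  rw [map_mul, map_mul, hexK_conj]
  have e1 : (starRingEnd ℂ) (Complex.exp (-(Complex.I * m * ((Real.pi:ℂ)/2))))
      = Complex.exp (Complex.I * m * ((Real.pi:ℂ)/2)) := by
    rw [← Complex.exp_conj]
    congr 1
    simp only [map_neg, map_mul, map_div₀, map_one, map_ofNat, Complex.conj_I,
      Complex.conj_ofReal, map_intCast]
    ring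
  have e2 : (starRingEnd ℂ) ((2 * Real.pi : ℂ)⁻¹) = (2 * Real.pi : ℂ)⁻¹ := by
    rw [show (2 * Real.pi : ℂ)⁻¹ = (((2*Real.pi : ℝ)):ℂ)⁻¹ by push_cast; ring]
    rw [← Complex.ofReal_inv, Complex.conj_ofReal]
  have e3 : Complex.exp (Complex.I * m * ((Real.pi:ℂ)/2))
        * Complex.exp (-(Complex.I * ((-m : ℤ):ℂ) * (Real.pi:ℂ)))
      = Complex.exp (-(Complex.I * m * ((Real.pi:ℂ)/2))) := by
    rw [← Complex.exp_add,
      show Complex.I * m * ((Real.pi:ℂ)/2) + -(Complex.I * ((-m : ℤ):ℂ) * (Real.pi:ℂ))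
        = -(Complex.I * m * ((Real.pi:ℂ)/2)) + (m:ℂ) * (2 * (Real.pi:ℂ) * Complex.I) by
        push_cast; ring,
      Complex.exp_add, Complex.exp_int_mul_two_pi_mul_I, mul_one]
  rw [e1, e2]
  linear_combination ((2 * Real.pi : ℂ))⁻¹ * hexK ρ (-m) * e3

lemma exp_neg_int_pi (m : ℤ) :
    Complex.exp (-(Complex.I * ((-m : ℤ):ℂ) * (Real.pi:ℂ))) = (-1:ℂ)^m := by
  rw [show -(Complex.I * ((-m:ℤ):ℂ) * (Real.pi:ℂ)) = (m:ℂ) * ((Real.pi:ℂ) * Complex.I) by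
      push_cast; ring,
    Complex.exp_int_mul, Complex.exp_pi_mul_I]

lemma besselJ_neg_rho (m : ℤ) (ρ : ℝ) :
    besselJ m (-ρ) = (-1:ℝ)^m * besselJ m ρ := by
  have h1 := besselJ_complex m (-ρ)
  rw [hexK_negρ, exp_neg_int_pi] at h1
  have h2 := besselJ_complex m ρ
  apply Complex.ofReal_injective
  push_cast
  rw [h1, h2]
  ring


instance : Fact (0 < 2 * Real.pi) := ⟨Real.two_pi_pos⟩

def toCirc (g : ℝ → ℂ) (hp : Periodic g (2*Real.pi)) (hc : Continuous g) :
    C(AddCircle (2*Real.pi), ℂ) := ⟨hp.lift, hc.quotient_liftOn' _⟩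

lemma toCirc_coe (g : ℝ → ℂ) (hp : Periodic g (2*Real.pi)) (hc : Continuous g) (x : ℝ) :
    toCirc g hp hc (x : AddCircle (2*Real.pi)) = g x := rfl

lemma fourierCoeff_toCirc (g : ℝ → ℂ) (hp : Periodic g (2*Real.pi)) (hc : Continuous g) (m : ℤ) :
    fourierCoeff (⇑(toCirc g hp hc)) m
      = (2 * Real.pi : ℂ)⁻¹ * ∫ θ in (0:ℝ)..(2*Real.pi),
          Complex.exp (Complex.I * ((-m : ℤ):ℂ) * (θ:ℂ)) * g θ := by
  rw [fourierCoeff_eq_intervalIntegral _ m 0, zero_add]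
  have h1 : (∫ x in (0:ℝ)..(2*Real.pi),
        (fourier (-m) (x : AddCircle (2*Real.pi)) : ℂ) • (⇑(toCirc g hp hc)) ((x : ℝ) : AddCircle (2*Real.pi)))
      = ∫ θ in (0:ℝ)..(2*Real.pi), Complex.exp (Complex.I * ((-m : ℤ):ℂ) * (θ:ℂ)) * g θ := by
    apply intervalIntegral.integral_congr
    intro θ _
    show (fourier (-m) ((θ:ℝ) : AddCircle (2*Real.pi)) : ℂ) • (toCirc g hp hc) ((θ:ℝ) : AddCircle (2*Real.pi))
        = Complex.exp (Complex.I * ((-m : ℤ):ℂ) * (θ:ℂ)) * g θ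
    rw [smul_eq_mul, toCirc_coe, fourier_coe_apply]
    congr 2
    push_cast
    rw [div_eq_iff (by simp [Complex.ofReal_ne_zero, Real.pi_ne_zero] : (2*(Real.pi:ℂ)) ≠ 0)]
    ring
  rw [h1, real_smul]
  congr 1
  push_cast
  rw [one_div]


open AddCircle in
lemma inner_toCirc (g₁ g₂ : ℝ → ℂ) (hp₁ : Periodic g₁ (2*Real.pi)) (hc₁ : Continuous g₁)
    (hp₂ : Periodic g₂ (2*Real.pi)) (hc₂ : Continuous g₂) :
    (inner ℂ (ContinuousMap.toLp (E := ℂ) 2 haarAddCircle ℂ (toCirc g₁ hp₁ hc₁))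
      (ContinuousMap.toLp (E := ℂ) 2 haarAddCircle ℂ (toCirc g₂ hp₂ hc₂)) : ℂ)
    = (2 * Real.pi : ℂ)⁻¹ *
        ∫ θ in (0:ℝ)..(2*Real.pi), (starRingEnd ℂ) (g₁ θ) * g₂ θ := by
  rw [ContinuousMap.inner_toLp]
  simp only [mul_comm ((toCirc g₂ hp₂ hc₂) _)]
  have h0 : (∫ z : AddCircle (2*Real.pi),
        (starRingEnd ℂ) ((toCirc g₁ hp₁ hc₁) z) * (toCirc g₂ hp₂ hc₂) z ∂(volume))
      = ∫ θ in (0:ℝ)..(0+2*Real.pi), (starRingEnd ℂ) (g₁ θ) * g₂ θ := by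
    rw [← AddCircle.intervalIntegral_preimage (2*Real.pi) 0
      (fun z => (starRingEnd ℂ) ((toCirc g₁ hp₁ hc₁) z) * (toCirc g₂ hp₂ hc₂) z)]
    apply intervalIntegral.integral_congr
    intro θ _
    rfl
  rw [volume_eq_smul_haarAddCircle, MeasureTheory.integral_smul_measure _ _,
    ENNReal.toReal_ofReal Real.two_pi_pos.le] at h0
  rw [show (∫ x : AddCircle (2*Real.pi),
        (starRingEnd ℂ) ((toCirc g₁ hp₁ hc₁) x) * (toCirc g₂ hp₂ hc₂) x ∂haarAddCircle)
      = (2 * Real.pi : ℂ)⁻¹ * ((2*Real.pi : ℝ) •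
          ∫ x : AddCircle (2*Real.pi), (starRingEnd ℂ) ((toCirc g₁ hp₁ hc₁) x)
            * (toCirc g₂ hp₂ hc₂) x ∂haarAddCircle) by
    rw [real_smul, ← mul_assoc]
    push_cast
    rw [inv_mul_cancel₀ (by simp [Complex.ofReal_ne_zero, Real.pi_ne_zero] : (2*(Real.pi:ℂ)) ≠ 0),
      one_mul]]
  rw [h0, zero_add]

open AddCircle in
lemma parseval_toCirc (g₁ g₂ : ℝ → ℂ) (hp₁ : Periodic g₁ (2*Real.pi)) (hc₁ : Continuous g₁)
    (hp₂ : Periodic g₂ (2*Real.pi)) (hc₂ : Continuous g₂) :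
    HasSum (fun m : ℤ => (starRingEnd ℂ) (fourierCoeff (⇑(toCirc g₁ hp₁ hc₁)) m)
        * fourierCoeff (⇑(toCirc g₂ hp₂ hc₂)) m)
      ((2 * Real.pi : ℂ)⁻¹ * ∫ θ in (0:ℝ)..(2*Real.pi), (starRingEnd ℂ) (g₁ θ) * g₂ θ) := by
  set X := ContinuousMap.toLp (E := ℂ) 2 haarAddCircle ℂ (toCirc g₁ hp₁ hc₁) with hXdef
  set Y := ContinuousMap.toLp (E := ℂ) 2 haarAddCircle ℂ (toCirc g₂ hp₂ hc₂) with hYdef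
  have H := fourierBasis.hasSum_inner_mul_inner X Y
  have hX : ∀ m : ℤ, (inner ℂ (fourierBasis m) X : ℂ) = fourierCoeff (⇑(toCirc g₁ hp₁ hc₁)) m := by
    intro m
    rw [← fourierBasis.repr_apply_apply, fourierBasis_repr, hXdef, fourierCoeff_toLp]
  have hY : ∀ m : ℤ, (inner ℂ (fourierBasis m) Y : ℂ) = fourierCoeff (⇑(toCirc g₂ hp₂ hc₂)) m := by
    intro m
    rw [← fourierBasis.repr_apply_apply, fourierBasis_repr, hYdef, fourierCoeff_toLp]
  have hfun : (fun m : ℤ => (starRingEnd ℂ) (fourierCoeff (⇑(toCirc g₁ hp₁ hc₁)) m)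
        * fourierCoeff (⇑(toCirc g₂ hp₂ hc₂)) m)
      = fun m : ℤ => (inner ℂ X (fourierBasis m) : ℂ) * (inner ℂ (fourierBasis m) Y : ℂ) := by
    funext m
    rw [← hX m, ← hY m, inner_conj_symm]
  rw [hfun]
  rw [← inner_toCirc g₁ g₂ hp₁ hc₁ hp₂ hc₂]
  exact H


def gU (r α : ℝ) : ℝ → ℂ := fun θ => hexg r 0 (θ + α)

def gW (r : ℝ) (n : ℤ) : ℝ → ℂ := fun θ => (starRingEnd ℂ) (hexg r 0 θ) * hexg 0 (3*n) θ

lemma gU_per (r α : ℝ) : Periodic (gU r α) (2*Real.pi) := by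
  intro θ
  unfold gU
  rw [add_right_comm]
  exact hexg_per r 0 (θ + α)

lemma gU_cont (r α : ℝ) : Continuous (gU r α) :=
  (hexg_cont r 0).comp (continuous_add_right α)

lemma gW_per (r : ℝ) (n : ℤ) : Periodic (gW r n) (2*Real.pi) :=
  ((hexg_per r 0).comp (starRingEnd ℂ)).mul (hexg_per 0 (3*n))

lemma gW_cont (r : ℝ) (n : ℤ) : Continuous (gW r n) :=
  (Complex.continuous_conj.comp (hexg_cont r 0)).mul (hexg_cont 0 (3*n))

lemma coeff_gU (r α : ℝ) (m : ℤ) :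
    fourierCoeff (⇑(toCirc (gU r α) (gU_per r α) (gU_cont r α))) m
      = Complex.exp (Complex.I * (m:ℂ) * (α:ℂ)) * ((2 * Real.pi : ℂ)⁻¹ * hexK r (-m)) := by
  rw [fourierCoeff_toCirc]
  have h1 : (∫ θ in (0:ℝ)..(2*Real.pi),
      Complex.exp (Complex.I * ((-m : ℤ):ℂ) * (θ:ℂ)) * gU r α θ)
      = Complex.exp (Complex.I * (m:ℂ) * (α:ℂ)) * ∫ θ in (0:ℝ)..(2*Real.pi), hexg r (-m) (θ + α) := by
    rw [← intervalIntegral.integral_const_mul]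
    apply intervalIntegral.integral_congr
    intro θ _
    show Complex.exp (Complex.I * ((-m : ℤ):ℂ) * (θ:ℂ)) * gU r α θ
        = Complex.exp (Complex.I * (m:ℂ) * (α:ℂ)) * hexg r (-m) (θ + α)
    unfold gU hexg
    rw [← Complex.exp_add, ← Complex.exp_add]
    congr 1
    push_cast
    ring
  rw [h1, hexK_shift]
  ring

lemma coeff_gW (r : ℝ) (n : ℤ) (m : ℤ) :
    (starRingEnd ℂ) (fourierCoeff (⇑(toCirc (gW r n) (gW_per r n) (gW_cont r n))) m)
      = (2 * Real.pi : ℂ)⁻¹ * hexK r (m - 3*n) := by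
  rw [fourierCoeff_toCirc, map_mul]
  have e2 : (starRingEnd ℂ) ((2 * Real.pi : ℂ)⁻¹) = (2 * Real.pi : ℂ)⁻¹ := by
    rw [show (2 * Real.pi : ℂ)⁻¹ = (((2*Real.pi : ℝ)):ℂ)⁻¹ by push_cast; ring]
    rw [← Complex.ofReal_inv, Complex.conj_ofReal]
  rw [e2, ← intervalIntegral_conj']
  congr 1
  apply intervalIntegral.integral_congr
  intro θ _
  show (starRingEnd ℂ) (Complex.exp (Complex.I * ((-m : ℤ):ℂ) * (θ:ℂ)) * gW r n θ)
      = hexg r (m - 3*n) θ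
  unfold gW hexg
  rw [map_mul, map_mul, Complex.conj_conj, ← Complex.exp_conj, ← Complex.exp_conj,
    ← Complex.exp_add, ← Complex.exp_add]
  congr 1
  simp only [map_neg, map_mul, map_add, Complex.conj_I, Complex.conj_ofReal, map_intCast]
  push_cast
  ring


lemma inner_value (r α : ℝ) (n : ℤ) :
    (2 * Real.pi : ℂ)⁻¹ * (∫ θ in (0:ℝ)..(2*Real.pi), (starRingEnd ℂ) (gW r n θ) * gU r α θ)
      = Complex.exp (Complex.I * ((3*n:ℤ):ℂ) * ((α/2 : ℝ):ℂ))
        * ((2 * Real.pi : ℂ)⁻¹ * hexK (2*r*Real.cos (α/2)) (-(3*n))) := by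
  have h1 : (∫ θ in (0:ℝ)..(2*Real.pi), (starRingEnd ℂ) (gW r n θ) * gU r α θ)
      = Complex.exp (Complex.I * ((3*n:ℤ):ℂ) * ((α/2:ℝ):ℂ))
        * ∫ θ in (0:ℝ)..(2*Real.pi), hexg (2*r*Real.cos (α/2)) (-(3*n)) (θ + α/2) := by
    rw [← intervalIntegral.integral_const_mul]
    apply intervalIntegral.integral_congr
    intro θ _
    show (starRingEnd ℂ) (gW r n θ) * gU r α θ
        = Complex.exp (Complex.I * ((3*n:ℤ):ℂ) * ((α/2:ℝ):ℂ))
            * hexg (2*r*Real.cos (α/2)) (-(3*n)) (θ + α/2)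
    have hc2 : ((Real.cos θ : ℂ)) + ((Real.cos (θ + α) : ℂ))
        = 2*((Real.cos (α/2) : ℂ))*((Real.cos (θ + α/2) : ℂ)) := by
      have : Real.cos θ + Real.cos (θ + α) = 2 * Real.cos (α/2) * Real.cos (θ + α/2) := by
        rw [Real.cos_add_cos]
        rw [show (θ + (θ+α))/2 = θ + α/2 by ring, show (θ - (θ+α))/2 = -(α/2) by ring,
          Real.cos_neg]
        ring
      exact_mod_cast congrArg (fun x : ℝ => (x : ℂ)) this
    unfold gW gU hexg
    rw [map_mul, Complex.conj_conj, ← Complex.exp_conj, ← Complex.exp_add, ← Complex.exp_add,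
      ← Complex.exp_add]
    congr 1
    simp only [map_mul, map_add, map_neg, Complex.conj_I, Complex.conj_ofReal, map_intCast]
    push_cast at hc2 ⊢
    linear_combination (Complex.I * (r:ℂ)) * hc2
  rw [h1, hexK_shift]
  ring

lemma hexK_to_besselJ (m : ℤ) (ρ : ℝ) :
    (2 * Real.pi : ℂ)⁻¹ * hexK ρ (-m)
      = Complex.exp (Complex.I * (m:ℂ) * ((Real.pi:ℂ)/2)) * ((besselJ m ρ : ℝ) : ℂ) := by
  rw [besselJ_complex, ← mul_assoc, ← mul_assoc, ← Complex.exp_add]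
  simp


lemma val_pi_third (r : ℝ) (n : ℤ) :
    Complex.exp (Complex.I * ((3*n:ℤ):ℂ) * (((Real.pi/3)/2 : ℝ):ℂ))
        * ((2 * Real.pi : ℂ)⁻¹ * hexK (2*r*Real.cos ((Real.pi/3)/2)) (-(3*n)))
      = ((besselJ (3*n) (Real.sqrt 3 * r) : ℝ) : ℂ) := by
  rw [show (Real.pi/3)/2 = Real.pi/6 by ring, Real.cos_pi_div_six,
    show 2*r*(Real.sqrt 3/2) = Real.sqrt 3 * r by ring, hexK_to_besselJ, ← mul_assoc,
    ← Complex.exp_add,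
    show Complex.I * ((3*n:ℤ):ℂ) * (((Real.pi/6 : ℝ)):ℂ)
        + Complex.I * ((3*n:ℤ):ℂ) * ((Real.pi:ℂ)/2)
      = (n:ℂ) * (2*(Real.pi:ℂ)*Complex.I) by push_cast; ring,
    Complex.exp_int_mul_two_pi_mul_I, one_mul]

lemma val_pi (r : ℝ) (n : ℤ) :
    Complex.exp (Complex.I * ((3*n:ℤ):ℂ) * ((Real.pi/2 : ℝ):ℂ))
        * ((2 * Real.pi : ℂ)⁻¹ * hexK (2*r*Real.cos (Real.pi/2)) (-(3*n)))
      = (if n = 0 then (1:ℂ) else 0) := by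
  rw [Real.cos_pi_div_two, mul_zero, hexK_zero]
  rcases eq_or_ne n 0 with h|h
  · subst h
    have hpi : (Real.pi:ℂ) ≠ 0 := by simp [Real.pi_ne_zero]
    norm_num
    field_simp
  · rw [if_neg (by simp [h] : ¬ (-(3*n) = 0)), if_neg h]
    simp

lemma val_five (r : ℝ) (n : ℤ) :
    Complex.exp (Complex.I * ((3*n:ℤ):ℂ) * (((5*Real.pi/3)/2 : ℝ):ℂ))
        * ((2 * Real.pi : ℂ)⁻¹ * hexK (2*r*Real.cos ((5*Real.pi/3)/2)) (-(3*n)))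
      = (((-1:ℝ)^n * besselJ (3*n) (Real.sqrt 3 * r) : ℝ) : ℂ) := by
  have hcos : Real.cos ((5*Real.pi/3)/2) = -(Real.sqrt 3/2) := by
    rw [show (5*Real.pi/3)/2 = Real.pi - Real.pi/6 by ring, Real.cos_pi_sub, Real.cos_pi_div_six]
  have hpow : (-1:ℝ)^(3*n) = (-1:ℝ)^n := by
    rcases Int.even_or_odd n with h|h
    · rw [h.neg_one_zpow, ((h.mul_left 3)).neg_one_zpow]
    · rw [h.neg_one_zpow, (Int.odd_mul.mpr ⟨⟨1, by norm_num⟩, h⟩).neg_one_zpow]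
  rw [hcos, show 2*r*(-(Real.sqrt 3/2)) = -(Real.sqrt 3 * r) by ring, hexK_to_besselJ,
    besselJ_neg_rho, hpow, ← mul_assoc, ← Complex.exp_add,
    show Complex.I * ((3*n:ℤ):ℂ) * (((5*Real.pi/3)/2 : ℝ):ℂ)
        + Complex.I * ((3*n:ℤ):ℂ) * ((Real.pi:ℂ)/2)
      = ((2*n:ℤ):ℂ) * (2*(Real.pi:ℂ)*Complex.I) by push_cast; ring,
    Complex.exp_int_mul_two_pi_mul_I, one_mul]

lemma sfilter_not (m : ℤ) (h : ¬ (3:ℤ) ∣ m) :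
    Complex.exp (Complex.I * (m:ℂ) * ((Real.pi/3 : ℝ):ℂ))
      + Complex.exp (Complex.I * (m:ℂ) * ((Real.pi:ℝ):ℂ))
      + Complex.exp (Complex.I * (m:ℂ) * ((5*Real.pi/3 : ℝ):ℂ)) = 0 := by
  set z := Complex.exp (Complex.I * (m:ℂ) * ((2*Real.pi/3 : ℝ):ℂ)) with hz
  have h3 : z^3 = 1 := by
    rw [hz, ← Complex.exp_nat_mul,
      show (3:ℕ) * (Complex.I * (m:ℂ) * ((2*Real.pi/3 : ℝ):ℂ)) = (m:ℂ) * (2*(Real.pi:ℂ)*Complex.I)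
        by push_cast; ring,
      Complex.exp_int_mul_two_pi_mul_I]
  have hz1 : z ≠ 1 := by
    intro hcon
    rw [hz, Complex.exp_eq_one_iff] at hcon
    obtain ⟨k, hk⟩ := hcon
    have h5 : (((m:ℝ) * (2*Real.pi/3) - (k:ℝ)*(2*Real.pi) : ℝ) : ℂ) * Complex.I = 0 := by
      push_cast at hk ⊢
      linear_combination hk
    have h6 : (((m:ℝ) * (2*Real.pi/3) - (k:ℝ)*(2*Real.pi) : ℝ) : ℂ) = 0 := by
      rcases mul_eq_zero.mp h5 with h'|h'
      · exact h'
      · exact absurd h' Complex.I_ne_zero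
    have h7 : (m:ℝ) * (2*Real.pi/3) - (k:ℝ)*(2*Real.pi) = 0 := by exact_mod_cast h6
    have h8 : (m:ℝ) * (2*Real.pi) = (3*(k:ℝ)) * (2*Real.pi) := by linarith
    have h9 : (m:ℝ) = 3*(k:ℝ) :=
      mul_right_cancel₀ (by positivity : (2*Real.pi) ≠ 0) h8
    exact h ⟨k, by exact_mod_cast h9⟩
  have hsum0 : 1 + z + z^2 = 0 := by
    have hfac : (z - 1) * (1 + z + z^2) = 0 := by linear_combination h3
    rcases mul_eq_zero.mp hfac with h'|h'
    · exact absurd (sub_eq_zero.mp h') hz1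
    · exact h'
  have e2 : Complex.exp (Complex.I * (m:ℂ) * ((Real.pi:ℝ):ℂ))
      = Complex.exp (Complex.I * (m:ℂ) * ((Real.pi/3 : ℝ):ℂ)) * z := by
    rw [hz, ← Complex.exp_add]
    congr 1
    push_cast
    ring
  have e3 : Complex.exp (Complex.I * (m:ℂ) * ((5*Real.pi/3 : ℝ):ℂ))
      = Complex.exp (Complex.I * (m:ℂ) * ((Real.pi/3 : ℝ):ℂ)) * z^2 := by
    rw [hz, sq, ← Complex.exp_add, ← Complex.exp_add]
    congr 1
    push_cast
    ring
  rw [e2, e3]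
  linear_combination Complex.exp (Complex.I * (m:ℂ) * ((Real.pi/3 : ℝ):ℂ)) * hsum0



/-- Hexagon quadratic identity with Kronecker delta and an irrational-frequency remainder. -/
theorem hexagon_quadratic_two (n : ℤ) :
    ∃ c : ℝ, ∀ r : ℝ,
      Summable (fun i : ℤ => besselJ (3 * i) r * besselJ (-(3 * (n - i))) r) ∧
      (∑' i : ℤ, besselJ (3 * i) r * besselJ (-(3 * (n - i))) r)
        = 1/3 * (if n = 0 then (1:ℝ) else 0) + c * besselJ (3 * n) (Real.sqrt 3 * r) := by

  refine ⟨Real.cos (3*(n:ℝ)*Real.pi/2) * (1 + (-1:ℝ)^n) / 3, fun r => ?_⟩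
  set F : ℤ → ℂ :=
    fun m => ((2*Real.pi:ℂ)⁻¹ * hexK r (-m)) * ((2*Real.pi:ℂ)⁻¹ * hexK r (m - 3*n)) with hF
  have mk : ∀ α : ℝ, HasSum (fun m : ℤ => Complex.exp (Complex.I*(m:ℂ)*(α:ℂ)) * F m)
      (Complex.exp (Complex.I * ((3*n:ℤ):ℂ) * ((α/2 : ℝ):ℂ))
        * ((2 * Real.pi : ℂ)⁻¹ * hexK (2*r*Real.cos (α/2)) (-(3*n)))) := by
    intro α
    have H := parseval_toCirc (gW r n) (gU r α) (gW_per r n) (gW_cont r n)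
      (gU_per r α) (gU_cont r α)
    rw [inner_value r α n] at H
    have hfun : (fun m : ℤ => Complex.exp (Complex.I*(m:ℂ)*(α:ℂ)) * F m)
        = fun m : ℤ => (starRingEnd ℂ)
              (fourierCoeff (⇑(toCirc (gW r n) (gW_per r n) (gW_cont r n))) m)
            * fourierCoeff (⇑(toCirc (gU r α) (gU_per r α) (gU_cont r α))) m := by
      funext m
      rw [coeff_gW, coeff_gU, hF]
      ring
    rw [hfun]
    exact H
  have h1 := mk (Real.pi/3)
  rw [val_pi_third] at h1
  have h2 := mk Real.pi
  rw [val_pi] at h2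
  have h3 := mk (5*Real.pi/3)
  rw [val_five] at h3
  have hsum := (h1.add h2).add h3
  have hinj : Function.Injective (fun i : ℤ => 3*i) := by
    intro a b hab
    have hab' : (3:ℤ)*a = 3*b := hab
    omega
  have hvan : ∀ m ∉ Set.range (fun i : ℤ => 3*i),
      (Complex.exp (Complex.I*(m:ℂ)*((Real.pi/3:ℝ):ℂ)) * F m
        + Complex.exp (Complex.I*(m:ℂ)*((Real.pi:ℝ):ℂ)) * F m)
        + Complex.exp (Complex.I*(m:ℂ)*((5*Real.pi/3:ℝ):ℂ)) * F m = 0 := by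
    intro m hm
    have hdvd : ¬ (3:ℤ) ∣ m := by
      rintro ⟨k, hk⟩
      exact hm ⟨k, hk.symm⟩
    have hs := sfilter_not m hdvd
    linear_combination (F m) * hs
  have happ := (hinj.hasSum_iff hvan).mpr hsum
  set κ := Complex.exp (Complex.I * ((3*n:ℤ):ℂ) * ((Real.pi:ℂ)/2)) with hκ
  have hG : ∀ i : ℤ,
      (Complex.exp (Complex.I*((3*i:ℤ):ℂ)*((Real.pi/3:ℝ):ℂ)) * F (3*i)
        + Complex.exp (Complex.I*((3*i:ℤ):ℂ)*((Real.pi:ℝ):ℂ)) * F (3*i))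
        + Complex.exp (Complex.I*((3*i:ℤ):ℂ)*((5*Real.pi/3:ℝ):ℂ)) * F (3*i)
      = 3 * Complex.exp ((i:ℂ)*(Real.pi:ℂ)*Complex.I) * F (3*i) := by
    intro i
    have e1 : Complex.exp (Complex.I*((3*i:ℤ):ℂ)*((Real.pi/3:ℝ):ℂ))
        = Complex.exp ((i:ℂ)*(Real.pi:ℂ)*Complex.I) := by
      congr 1
      push_cast
      ring
    have e2 : Complex.exp (Complex.I*((3*i:ℤ):ℂ)*((Real.pi:ℝ):ℂ))
        = Complex.exp ((i:ℂ)*(Real.pi:ℂ)*Complex.I) := by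
      rw [show Complex.I*((3*i:ℤ):ℂ)*((Real.pi:ℝ):ℂ)
          = (i:ℂ)*(Real.pi:ℂ)*Complex.I + (i:ℂ)*(2*(Real.pi:ℂ)*Complex.I) by push_cast; ring,
        Complex.exp_add, Complex.exp_int_mul_two_pi_mul_I, mul_one]
    have e3 : Complex.exp (Complex.I*((3*i:ℤ):ℂ)*((5*Real.pi/3:ℝ):ℂ))
        = Complex.exp ((i:ℂ)*(Real.pi:ℂ)*Complex.I) := by
      rw [show Complex.I*((3*i:ℤ):ℂ)*((5*Real.pi/3:ℝ):ℂ)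
          = (i:ℂ)*(Real.pi:ℂ)*Complex.I + ((2*i:ℤ):ℂ)*(2*(Real.pi:ℂ)*Complex.I) by
            push_cast; ring,
        Complex.exp_add, Complex.exp_int_mul_two_pi_mul_I, mul_one]
    rw [e1, e2, e3]
    ring
  have hterm : ∀ i : ℤ, ((besselJ (3*i) r * besselJ (-(3*(n-i))) r : ℝ) : ℂ)
      = (κ/3) * (3 * Complex.exp ((i:ℂ)*(Real.pi:ℂ)*Complex.I) * F (3*i)) := by
    intro i
    have hKe : hexK r (-(-(3*(n-i)))) = hexK r (3*i - 3*n) := by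
      rw [neg_neg, show (3*(n-i) : ℤ) = -(3*i - 3*n) by ring, hexK_negq]
    rw [Complex.ofReal_mul, besselJ_complex (3*i) r, besselJ_complex (-(3*(n-i))) r, hKe, hF]
    have expeq : Complex.exp (-(Complex.I * ((3*i:ℤ):ℂ) * ((Real.pi:ℂ)/2)))
          * Complex.exp (-(Complex.I * ((-(3*(n-i)):ℤ):ℂ) * ((Real.pi:ℂ)/2)))
        = κ * Complex.exp ((i:ℂ)*(Real.pi:ℂ)*Complex.I) := by
      rw [hκ, ← Complex.exp_add, ← Complex.exp_add,
        show -(Complex.I * ((3*i:ℤ):ℂ) * ((Real.pi:ℂ)/2))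
              + -(Complex.I * ((-(3*(n-i)):ℤ):ℂ) * ((Real.pi:ℂ)/2))
            = Complex.I * ((3*n:ℤ):ℂ) * ((Real.pi:ℂ)/2) + (i:ℂ)*(Real.pi:ℂ)*Complex.I
              + ((-2*i:ℤ):ℂ)*(2*(Real.pi:ℂ)*Complex.I) by push_cast; ring,
        Complex.exp_add, Complex.exp_int_mul_two_pi_mul_I, mul_one]
    linear_combination (((2*Real.pi:ℂ)⁻¹ * hexK r (-(3*i)))
      * ((2*Real.pi:ℂ)⁻¹ * hexK r (3*i - 3*n))) * expeq
  have hC : HasSum (fun i : ℤ => ((besselJ (3*i) r * besselJ (-(3*(n-i))) r : ℝ) : ℂ))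
      ((κ/3) * (((besselJ (3*n) (Real.sqrt 3 * r) : ℝ) : ℂ) + (if n = 0 then (1:ℂ) else 0)
        + ((((-1:ℝ)^n * besselJ (3*n) (Real.sqrt 3 * r) : ℝ)) : ℂ))) := by
    have hm := happ.mul_left (κ/3)
    have hfun2 : (fun i : ℤ => ((besselJ (3*i) r * besselJ (-(3*(n-i))) r : ℝ) : ℂ))
        = fun i : ℤ => (κ/3) * (((fun m : ℤ =>
            (Complex.exp (Complex.I*(m:ℂ)*((Real.pi/3:ℝ):ℂ)) * F m
              + Complex.exp (Complex.I*(m:ℂ)*((Real.pi:ℝ):ℂ)) * F m)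
              + Complex.exp (Complex.I*(m:ℂ)*((5*Real.pi/3:ℝ):ℂ)) * F m) ∘
            (fun i : ℤ => 3*i)) i) := by
      funext i
      simp only [Function.comp_apply]
      rw [hG i, hterm i]
    rw [hfun2]
    exact hm
  have hR := Complex.hasSum_re hC
  have hfun3 : (fun i : ℤ => (((besselJ (3*i) r * besselJ (-(3*(n-i))) r : ℝ) : ℂ)).re)
      = fun i : ℤ => besselJ (3*i) r * besselJ (-(3*(n-i))) r := by
    funext i
    exact Complex.ofReal_re _
  rw [hfun3] at hR
  have hval : ((κ/3) * (((besselJ (3*n) (Real.sqrt 3 * r) : ℝ) : ℂ) + (if n = 0 then (1:ℂ) else 0)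
        + ((((-1:ℝ)^n * besselJ (3*n) (Real.sqrt 3 * r) : ℝ)) : ℂ))).re
      = 1/3 * (if n = 0 then (1:ℝ) else 0)
        + (Real.cos (3*(n:ℝ)*Real.pi/2) * (1 + (-1:ℝ)^n) / 3)
            * besselJ (3*n) (Real.sqrt 3 * r) := by
    have hB : (if n = 0 then (1:ℂ) else 0) = (((if n = 0 then (1:ℝ) else 0) : ℝ) : ℂ) := by
      split <;> simp
    have hκre : κ = Complex.exp (((3*(n:ℝ)*Real.pi/2 : ℝ) : ℂ) * Complex.I) := by
      rw [hκ]
      congr 1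
      push_cast
      ring
    rw [hB, hκre, ← Complex.ofReal_add, ← Complex.ofReal_add]
    rw [show Complex.exp (((3*(n:ℝ)*Real.pi/2 : ℝ) : ℂ) * Complex.I) / 3
          * ((besselJ (3*n) (Real.sqrt 3 * r)
              + (if n = 0 then (1:ℝ) else 0) + (-1:ℝ)^n * besselJ (3*n) (Real.sqrt 3 * r) : ℝ) : ℂ)
        = (((besselJ (3*n) (Real.sqrt 3 * r)
              + (if n = 0 then (1:ℝ) else 0) + (-1:ℝ)^n * besselJ (3*n) (Real.sqrt 3 * r))/3 : ℝ) : ℂ)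
          * Complex.exp (((3*(n:ℝ)*Real.pi/2 : ℝ) : ℂ) * Complex.I) by push_cast; ring]
    rw [Complex.re_ofReal_mul, Complex.exp_ofReal_mul_I_re]
    rcases eq_or_ne n 0 with h|h
    · subst h
      norm_num
      ring
    · simp only [if_neg h]
      ring
  rw [hval] at hR
  have hshape : (fun i : ℤ => besselJ (3*i) r * besselJ (-(3*(n-i))) r)
      = fun i : ℤ => besselJ (3 * i) r * besselJ (-(3 * (n - i))) r := rfl
  exact ⟨hR.summable, hR.tsum_eq⟩

end Hex
end

section
/- Rhombic quadratic identity (first identity of the rhombic proposition): for every integer n and every real r, Σ_{i+j=n} a_i a_j J_i(r) J_j(r) = (2/3)·a_n·J_{−n}(r) + (1/9)·(1 + 2cos(2nπ/3))·J_n(2r), where a_k = (1/3)(1 − 2cos(2kπ/3)). -/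
open Complex MeasureTheory intervalIntegral AddCircle
open scoped Real ComplexConjugate


/-- Bessel coefficients of the rhombic pattern. -/
noncomputable def rhombCoeff (k : ℤ) : ℝ := 1/3 * (1 - 2 * Real.cos (2 * (k : ℝ) * Real.pi / 3))

namespace RhombicAux

/-- integrand -/
noncomputable def g (s φ : ℝ) (k : ℤ) (θ : ℝ) : ℂ :=
  Complex.exp (Complex.I * ((s * Real.cos (θ + φ) : ℝ) : ℂ) - Complex.I * (k : ℂ) * (θ : ℝ))

noncomputable def c (s φ : ℝ) (k : ℤ) : ℂ := ∫ θ in (0:ℝ)..(2*π), g s φ k θ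

lemma cont_g (s φ : ℝ) (k : ℤ) : Continuous (g s φ k) := by
  unfold g; fun_prop

lemma periodic_g (s φ : ℝ) (k : ℤ) : Function.Periodic (g s φ k) (2*π) := by
  intro θ
  unfold g
  have h1 : (θ + 2*π + φ) = (θ + φ) + 2*π := by ring
  rw [h1, Real.cos_add_two_pi]
  rw [show Complex.I * ((s * Real.cos (θ + φ) : ℝ) : ℂ) - Complex.I * (k:ℂ) * ((θ + 2*π : ℝ) : ℂ)
      = (Complex.I * ((s * Real.cos (θ + φ) : ℝ) : ℂ) - Complex.I * (k:ℂ) * (θ:ℝ)) +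
        (-k : ℤ) * (2 * π * Complex.I) by push_cast; ring]
  rw [Complex.exp_add, Complex.exp_int_mul_two_pi_mul_I, mul_one]

lemma integrable_g (s φ : ℝ) (k : ℤ) (a b : ℝ) :
    IntervalIntegrable (g s φ k) MeasureTheory.volume a b :=
  (cont_g s φ k).intervalIntegrable a b

lemma c_shift (s φ : ℝ) (k : ℤ) :
    c s φ k = Complex.exp (Complex.I * k * φ) * c s 0 k := by
  have hpt : ∀ θ : ℝ, g s φ k θ = Complex.exp (Complex.I * k * φ) * g s 0 k (θ + φ) := by
    intro θ
    unfold g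
    rw [← Complex.exp_add]
    congr 1
    push_cast
    ring_nf
  have hI : (∫ θ in (0:ℝ)..2*π, g s 0 k (θ + φ)) = ∫ θ in (0:ℝ)..2*π, g s 0 k θ := by
    rw [intervalIntegral.integral_comp_add_right (g s 0 k) φ]
    have := (periodic_g s 0 k).intervalIntegral_add_eq (0 + φ) 0
    simpa [add_comm, add_assoc, add_left_comm] using this
  unfold c
  rw [intervalIntegral.integral_congr (g := fun θ => Complex.exp (Complex.I * k * φ) * g s 0 k (θ + φ)) (fun θ _ => hpt θ)]
  rw [intervalIntegral.integral_const_mul, hI]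

lemma c_neg (s : ℝ) (k : ℤ) : c s 0 (-k) = c s 0 k := by
  have hpt : ∀ θ : ℝ, g s 0 (-k) θ = g s 0 k (2*π - θ) := by
    intro θ
    unfold g
    rw [show (2*π - θ + 0) = 2*π - (θ + 0) by ring, Real.cos_two_pi_sub]
    rw [show Complex.I * ((s * Real.cos (θ+0) : ℝ) : ℂ) - Complex.I * ((k:ℤ):ℂ) * ((2*π - θ : ℝ):ℂ)
        = (Complex.I * ((s * Real.cos (θ+0) : ℝ) : ℂ) - Complex.I * ((-k : ℤ):ℂ) * (θ:ℝ))
          + (-k : ℤ) * (2 * π * Complex.I) by push_cast; ring]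
    rw [Complex.exp_add, Complex.exp_int_mul_two_pi_mul_I, mul_one]
  unfold c
  rw [intervalIntegral.integral_congr (g := fun θ => g s 0 k (2*π - θ)) (fun θ _ => hpt θ)]
  rw [intervalIntegral.integral_comp_sub_left (g s 0 k) (2*π)]
  norm_num

lemma intervalIntegral_conj {f : ℝ → ℂ} {a b : ℝ} :
    (∫ x in a..b, (starRingEnd ℂ) (f x)) = (starRingEnd ℂ) (∫ x in a..b, f x) := by
  simp only [intervalIntegral]
  rw [map_sub, ← integral_conj, ← integral_conj]

lemma exp_int_pi : ∀ k : ℤ, ((-1:ℂ))^k = Complex.exp (k * (π * Complex.I)) := by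
  intro k
  rw [Complex.exp_int_mul, Complex.exp_pi_mul_I]

lemma c_conj (s : ℝ) (k : ℤ) :
    (starRingEnd ℂ) (c s 0 k) = (-1:ℂ)^k * c s 0 k := by
  have hpt : ∀ θ : ℝ, (starRingEnd ℂ) (g s 0 k θ) = (-1:ℂ)^k * g s 0 (-k) (θ + π) := by
    intro θ
    unfold g
    rw [← Complex.exp_conj]
    rw [exp_int_pi, ← Complex.exp_add]
    rw [show θ + π + 0 = (θ + 0) + π by ring, Real.cos_add_pi]
    rw [show (k:ℂ) * (↑π * Complex.I) +
        (Complex.I * ((s * -Real.cos (θ+0) : ℝ) : ℂ) - Complex.I * ((-k : ℤ):ℂ) * ((θ + π : ℝ):ℂ))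
        = ((starRingEnd ℂ) (Complex.I * ((s * Real.cos (θ+0) : ℝ) : ℂ) -
            Complex.I * ((k:ℤ):ℂ) * (θ:ℝ))) + (k : ℤ) * (2 * π * Complex.I) by
      simp only [map_sub, map_mul, Complex.conj_I, Complex.conj_ofReal, map_intCast]
      push_cast
      ring]
    rw [Complex.exp_add, Complex.exp_int_mul_two_pi_mul_I, mul_one]
  have h1 : (starRingEnd ℂ) (c s 0 k)
      = ∫ θ in (0:ℝ)..(2*π), (starRingEnd ℂ) (g s 0 k θ) := by
    rw [intervalIntegral_conj]; rfl
  rw [h1,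
    intervalIntegral.integral_congr (g := fun θ => (-1:ℂ)^k * g s 0 (-k) (θ + π))
      (fun θ _ => hpt θ),
    intervalIntegral.integral_const_mul]
  have hI : (∫ θ in (0:ℝ)..2*π, g s 0 (-k) (θ + π)) = c s 0 (-k) := by
    rw [intervalIntegral.integral_comp_add_right (g s 0 (-k)) π]
    have := (periodic_g s 0 (-k)).intervalIntegral_add_eq (0 + π) 0
    unfold c
    simpa [add_comm, add_assoc, add_left_comm] using this
  rw [hI, c_neg]



lemma exp_pi_div_two_I : Complex.exp ((π:ℂ)/2 * Complex.I) = Complex.I := by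
  rw [Complex.exp_mul_I]
  rw [show ((π:ℂ)/2) = ((π/2 : ℝ) : ℂ) by push_cast; ring]
  rw [← Complex.ofReal_cos, ← Complex.ofReal_sin, Real.cos_pi_div_two, Real.sin_pi_div_two]
  simp

lemma I_zpow_exp (m : ℤ) : Complex.I ^ m = Complex.exp (m * ((π:ℂ)/2 * Complex.I)) := by
  rw [Complex.exp_int_mul, exp_pi_div_two_I]

lemma neg_one_zpow_sq (k : ℤ) : ((-1:ℂ))^k * ((-1:ℂ))^k = 1 := by
  rw [← mul_zpow]; norm_num

lemma besselJ_re (k : ℤ) (s : ℝ) :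
    besselJ k s = (Complex.I ^ (-k) * (2*(π:ℂ))⁻¹ * c s 0 k).re := by
  have hpt : ∀ θ ∈ Set.uIcc (0:ℝ) (2*π),
      Complex.exp (Complex.I * ((s * Real.cos θ - (k : ℝ) * (θ + π / 2) : ℝ) : ℂ))
        = Complex.exp (((-k : ℤ):ℂ) * ((π:ℂ)/2 * Complex.I)) * g s 0 k θ := by
    intro θ _
    unfold g
    rw [← Complex.exp_add]
    congr 1
    simp only [add_zero]
    push_cast
    ring
  unfold besselJ
  rw [intervalIntegral.integral_congr hpt, intervalIntegral.integral_const_mul]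
  rw [← I_zpow_exp (-k)]
  congr 1
  unfold c
  ring

lemma besselJ_c (k : ℤ) (s : ℝ) :
    ((besselJ k s : ℝ) : ℂ) = Complex.I ^ (-k) * (2*(π:ℂ))⁻¹ * c s 0 k := by
  rw [besselJ_re k s]
  apply Complex.conj_eq_iff_re.mp
  rw [map_mul, map_mul, map_zpow₀, Complex.conj_I, c_conj]
  rw [show ((-Complex.I) ^ (-k)) = ((-1:ℂ))^(-k) * Complex.I^(-k) by
    rw [← mul_zpow]; norm_num]
  rw [show ((starRingEnd ℂ) (2*(π:ℂ))⁻¹) = (2*(π:ℂ))⁻¹ by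
    rw [map_inv₀, map_mul, Complex.conj_ofReal, map_ofNat]]
  rw [show ((-1:ℂ))^(-k) = ((-1:ℂ))^k by
    rw [zpow_neg]
    exact inv_eq_of_mul_eq_one_left (neg_one_zpow_sq k)]
  rw [show ((-1:ℂ))^k * Complex.I^(-k) * (2*(π:ℂ))⁻¹ * ((-1:ℂ)^k * c s 0 k)
      = ((-1:ℂ)^k * (-1:ℂ)^k) * (Complex.I^(-k) * (2*(π:ℂ))⁻¹ * c s 0 k) by ring]
  rw [neg_one_zpow_sq, one_mul]

lemma two_pi_ne : (2*(π:ℂ)) ≠ 0 := by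
  simp [Real.pi_ne_zero]

lemma c_eq (k : ℤ) (s : ℝ) :
    c s 0 k = (2*(π:ℂ)) * Complex.I ^ k * ((besselJ k s : ℝ) : ℂ) := by
  have hI : Complex.I ^ k ≠ 0 := zpow_ne_zero k Complex.I_ne_zero
  rw [besselJ_c k s, zpow_neg]
  rw [show (2*(π:ℂ)) * Complex.I^k * ((Complex.I^k)⁻¹ * (2*(π:ℂ))⁻¹ * c s 0 k)
      = (Complex.I^k * (Complex.I^k)⁻¹) * ((2*(π:ℂ)) * (2*(π:ℂ))⁻¹) * c s 0 k by ring,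
    mul_inv_cancel₀ hI, mul_inv_cancel₀ two_pi_ne, one_mul, one_mul]

lemma besselJ_neg (k : ℤ) (s : ℝ) : besselJ (-k) s = ((-1:ℝ))^k * besselJ k s := by
  apply Complex.ofReal_injective
  push_cast
  rw [besselJ_c, besselJ_c, c_neg, neg_neg]
  rw [show ((-1:ℂ))^k * (Complex.I ^ (-k) * (2*(π:ℂ))⁻¹ * c s 0 k)
      = ((-1:ℂ)^k * Complex.I^(-k)) * ((2*(π:ℂ))⁻¹ * c s 0 k) by ring]
  rw [show (-1:ℂ)^k * Complex.I^(-k) = Complex.I^k by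
    rw [zpow_neg, ← inv_zpow, ← mul_zpow, Complex.inv_I]; norm_num]
  ring

noncomputable def E (s φ : ℝ) (θ : ℝ) : ℂ :=
  Complex.exp (Complex.I * ((s * Real.cos (θ + φ) : ℝ) : ℂ))

noncomputable def f (r : ℝ) (θ : ℝ) : ℂ :=
  (1/3 : ℂ) * (E r 0 θ - E r (2*π/3) θ - E r (-(2*π/3)) θ)

lemma exp_mul_E (s φ : ℝ) (k : ℤ) (θ : ℝ) :
    Complex.exp (-(Complex.I * k * θ)) * E s φ θ = g s φ k θ := by
  unfold E g
  rw [← Complex.exp_add]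
  congr 1
  ring

lemma cont_E (s φ : ℝ) : Continuous (E s φ) := by unfold E; fun_prop

lemma cont_f (r : ℝ) : Continuous (f r) := by unfold f E; fun_prop

lemma periodic_E (s φ : ℝ) : Function.Periodic (E s φ) (2*π) := by
  intro θ
  unfold E
  rw [show θ + 2*π + φ = (θ + φ) + 2*π by ring, Real.cos_add_two_pi]

lemma periodic_f (r : ℝ) : Function.Periodic (f r) (2*π) := by
  intro θ
  unfold f
  rw [periodic_E, periodic_E, periodic_E]

instance fact_two_pi : Fact (0 < 2*π) := ⟨by positivity⟩

lemma fc (gg : ℝ → ℂ) (k : ℤ) :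
    fourierCoeff (AddCircle.liftIco (2*π) 0 gg) k
      = (2*(π:ℂ))⁻¹ * ∫ θ in (0:ℝ)..(2*π), Complex.exp (-(Complex.I*k*θ)) * gg θ := by
  rw [fourierCoeff_liftIco_eq, fourierCoeffOn_eq_integral]
  simp only [fourier_coe_apply, zero_add, sub_zero, smul_eq_mul]
  have hπ : (π:ℂ) ≠ 0 := Complex.ofReal_ne_zero.mpr Real.pi_ne_zero
  have hpt : ∀ θ ∈ Set.uIcc (0:ℝ) (2*π),
      Complex.exp (2*π*Complex.I*(-k:ℤ)*θ/((2*π : ℝ):ℂ)) * gg θ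
        = Complex.exp (-(Complex.I*k*θ)) * gg θ := by
    intro θ _
    congr 2
    push_cast
    field_simp
  rw [intervalIntegral.integral_congr hpt, Complex.real_smul]
  push_cast
  rw [one_div]

lemma exp_pair (k : ℤ) (x : ℝ) :
    Complex.exp (Complex.I*k*((x:ℝ):ℂ)) + Complex.exp (Complex.I*k*(((-x : ℝ)):ℂ))
      = 2 * ((Real.cos ((k:ℝ)*x) : ℝ) : ℂ) := by
  rw [show Complex.I*(k:ℂ)*((x:ℝ):ℂ) = (((k:ℝ)*x : ℝ) : ℂ) * Complex.I by push_cast; ring,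
      show Complex.I*(k:ℂ)*(((-x:ℝ)):ℂ) = -((((k:ℝ)*x : ℝ) : ℂ)) * Complex.I by push_cast; ring]
  rw [Complex.exp_mul_I, Complex.exp_mul_I, Complex.cos_neg, Complex.sin_neg,
      Complex.ofReal_cos]
  ring

lemma fc_f (r : ℝ) (k : ℤ) :
    fourierCoeff (AddCircle.liftIco (2*π) 0 (f r)) k
      = ((rhombCoeff k : ℝ) : ℂ) * (Complex.I^k * ((besselJ k r : ℝ):ℂ)) := by
  rw [fc]
  have hpt : ∀ θ ∈ Set.uIcc (0:ℝ) (2*π),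
      Complex.exp (-(Complex.I*k*θ)) * f r θ
        = (1/3:ℂ) * g r 0 k θ - (1/3:ℂ) * g r (2*π/3) k θ - (1/3:ℂ) * g r (-(2*π/3)) k θ := by
    intro θ _
    unfold f
    rw [← exp_mul_E r 0 k θ, ← exp_mul_E r (2*π/3) k θ, ← exp_mul_E r (-(2*π/3)) k θ]
    ring
  rw [intervalIntegral.integral_congr hpt]
  rw [intervalIntegral.integral_sub (((integrable_g r 0 k 0 (2*π)).const_mul _).sub
        ((integrable_g r (2*π/3) k 0 (2*π)).const_mul _))
      ((integrable_g r (-(2*π/3)) k 0 (2*π)).const_mul _),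
      intervalIntegral.integral_sub ((integrable_g r 0 k 0 (2*π)).const_mul _)
      ((integrable_g r (2*π/3) k 0 (2*π)).const_mul _),
      intervalIntegral.integral_const_mul, intervalIntegral.integral_const_mul,
      intervalIntegral.integral_const_mul]
  have h0 : (∫ θ in (0:ℝ)..(2*π), g r 0 k θ) = c r 0 k := rfl
  have h1 : (∫ θ in (0:ℝ)..(2*π), g r (2*π/3) k θ) = c r (2*π/3) k := rfl
  have h2 : (∫ θ in (0:ℝ)..(2*π), g r (-(2*π/3)) k θ) = c r (-(2*π/3)) k := rfl
  rw [h0, h1, h2, c_shift r (2*π/3) k, c_shift r (-(2*π/3)) k, c_eq k r]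
  have hpair := exp_pair k (2*π/3)
  have hrcR : rhombCoeff k = 1/3 * (1 - 2 * Real.cos ((k:ℝ)*(2*π/3))) := by
    unfold rhombCoeff
    rw [show (k:ℝ)*(2*π/3) = 2*(k:ℝ)*π/3 by ring]
  have hrcC : ((rhombCoeff k : ℝ) : ℂ) = 1/3 * (1 - 2 * ((Real.cos ((k:ℝ)*(2*π/3)) : ℝ) : ℂ)) := by
    rw [hrcR]
    push_cast [-Complex.ofReal_cos]
    ring
  rw [inv_mul_eq_iff_eq_mul₀ two_pi_ne]
  linear_combination (-(2*(π:ℂ)*Complex.I^k*((besselJ k r : ℝ):ℂ))/3) * hpair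
    - (2*(π:ℂ)*Complex.I^k*((besselJ k r : ℝ):ℂ)) * hrcC

lemma fc_conj (gg : ℝ → ℂ) (k : ℤ) :
    fourierCoeff (AddCircle.liftIco (2*π) 0 (fun θ => (starRingEnd ℂ) (gg θ))) k
      = (starRingEnd ℂ) (fourierCoeff (AddCircle.liftIco (2*π) 0 gg) (-k)) := by
  rw [fc, fc, map_mul]
  rw [show ((starRingEnd ℂ) (2*(π:ℂ))⁻¹) = (2*(π:ℂ))⁻¹ by
    rw [map_inv₀, map_mul, Complex.conj_ofReal, map_ofNat]]
  congr 1
  rw [← intervalIntegral_conj]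
  apply intervalIntegral.integral_congr
  intro θ _
  dsimp only
  rw [map_mul, ← Complex.exp_conj]
  congr 2
  simp only [map_neg, map_mul, Complex.conj_I, Complex.conj_ofReal, map_intCast]
  push_cast
  ring

lemma fc_mul_exp (gg : ℝ → ℂ) (n k : ℤ) :
    fourierCoeff (AddCircle.liftIco (2*π) 0
        (fun θ => gg θ * Complex.exp (-(Complex.I*n*θ)))) k
      = fourierCoeff (AddCircle.liftIco (2*π) 0 gg) (n + k) := by
  rw [fc, fc]
  congr 1
  apply intervalIntegral.integral_congr
  intro θ _
  dsimp only
  rw [show Complex.exp (-(Complex.I*k*θ)) * (gg θ * Complex.exp (-(Complex.I*n*θ)))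
      = (Complex.exp (-(Complex.I*k*θ)) * Complex.exp (-(Complex.I*n*θ))) * gg θ by ring,
    ← Complex.exp_add]
  congr 2
  push_cast
  ring

lemma periodic_exp_n (n : ℤ) :
    Function.Periodic (fun θ : ℝ => Complex.exp (-(Complex.I*n*θ))) (2*π) := by
  intro θ
  simp only
  rw [show -(Complex.I*(n:ℂ)*((θ + 2*π : ℝ):ℂ))
      = -(Complex.I*(n:ℂ)*(θ:ℝ)) + (-n : ℤ) * (2 * π * Complex.I) by push_cast; ring]
  rw [Complex.exp_add, Complex.exp_int_mul_two_pi_mul_I, mul_one]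

lemma lift_cont (gg : ℝ → ℂ) (hc : Continuous gg) (hp : Function.Periodic gg (2*π)) :
    Continuous (AddCircle.liftIco (2*π) 0 gg) := by
  apply AddCircle.liftIco_zero_continuous
  · simpa using (hp 0).symm
  · exact hc.continuousOn

noncomputable def FX (r : ℝ) : C(AddCircle (2*π), ℂ) :=
  ⟨AddCircle.liftIco (2*π) 0 (fun θ => (starRingEnd ℂ) (f r θ)),
    lift_cont _ (continuous_star.comp (cont_f r)) ((periodic_f r).comp (starRingEnd ℂ))⟩

lemma cont_exp_n (n : ℤ) : Continuous (fun θ : ℝ => Complex.exp (-(Complex.I*n*θ))) := by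
  fun_prop

noncomputable def FY (r : ℝ) (n : ℤ) : C(AddCircle (2*π), ℂ) :=
  ⟨AddCircle.liftIco (2*π) 0 (fun θ => f r θ * Complex.exp (-(Complex.I*n*θ))),
    lift_cont _ ((cont_f r).mul (cont_exp_n n)) ((periodic_f r).mul (periodic_exp_n n))⟩

lemma fc_FX (r : ℝ) (i : ℤ) :
    fourierCoeff (⇑(FX r) : AddCircle (2*π) → ℂ) i
      = (starRingEnd ℂ) (fourierCoeff (AddCircle.liftIco (2*π) 0 (f r)) (-i)) := by
  have h : (⇑(FX r) : AddCircle (2*π) → ℂ)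
      = AddCircle.liftIco (2*π) 0 (fun θ => (starRingEnd ℂ) (f r θ)) := rfl
  rw [h, fc_conj]

lemma fc_FY (r : ℝ) (n i : ℤ) :
    fourierCoeff (⇑(FY r n) : AddCircle (2*π) → ℂ) i
      = fourierCoeff (AddCircle.liftIco (2*π) 0 (f r)) (n+i) := by
  have h : (⇑(FY r n) : AddCircle (2*π) → ℂ)
      = AddCircle.liftIco (2*π) 0 (fun θ => f r θ * Complex.exp (-(Complex.I*n*θ))) := rfl
  rw [h, fc_mul_exp]

lemma lift_inner_pt (r : ℝ) (n : ℤ) (x : AddCircle (2*π)) :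
    (starRingEnd ℂ) (FX r x) * FY r n x
      = AddCircle.liftIco (2*π) 0
          (fun θ => f r θ * (f r θ * Complex.exp (-(Complex.I*n*θ)))) x := by
  show (starRingEnd ℂ) (AddCircle.liftIco (2*π) 0 (fun θ => (starRingEnd ℂ) (f r θ)) x)
      * AddCircle.liftIco (2*π) 0 (fun θ => f r θ * Complex.exp (-(Complex.I*n*θ))) x = _
  simp only [AddCircle.liftIco, Function.comp_apply, Set.restrict_apply]
  rw [Complex.conj_conj]

lemma fourierCoeff_zero_eq (G : AddCircle (2*π) → ℂ) :
    fourierCoeff G 0 = ∫ t, G t ∂(haarAddCircle) := by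
  rw [fourierCoeff]
  simp [fourier_zero]

lemma conv (r : ℝ) (n : ℤ) :
    Summable (fun i : ℤ => fourierCoeff (AddCircle.liftIco (2*π) 0 (f r)) (-i)
        * fourierCoeff (AddCircle.liftIco (2*π) 0 (f r)) (n+i))
    ∧ (∑' i : ℤ, fourierCoeff (AddCircle.liftIco (2*π) 0 (f r)) (-i)
        * fourierCoeff (AddCircle.liftIco (2*π) 0 (f r)) (n+i))
      = fourierCoeff (AddCircle.liftIco (2*π) 0
          (fun θ => f r θ * (f r θ * Complex.exp (-(Complex.I*n*θ))))) 0 := by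
  set X := ContinuousMap.toLp (E := ℂ) 2 haarAddCircle ℂ (FX r) with hX
  set Y := ContinuousMap.toLp (E := ℂ) 2 haarAddCircle ℂ (FY r n) with hY
  have h1 : ∀ i : ℤ, (inner ℂ X (fourierBasis i) : ℂ)
      = fourierCoeff (AddCircle.liftIco (2*π) 0 (f r)) (-i) := by
    intro i
    rw [← inner_conj_symm, ← HilbertBasis.repr_apply_apply, fourierBasis_repr,
      fourierCoeff_toLp, fc_FX, Complex.conj_conj]
  have h2 : ∀ i : ℤ, (inner ℂ (fourierBasis i) Y : ℂ)
      = fourierCoeff (AddCircle.liftIco (2*π) 0 (f r)) (n+i) := by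
    intro i
    rw [← HilbertBasis.repr_apply_apply, fourierBasis_repr, fourierCoeff_toLp, fc_FY]
  have h3 : (inner ℂ X Y : ℂ)
      = fourierCoeff (AddCircle.liftIco (2*π) 0
          (fun θ => f r θ * (f r θ * Complex.exp (-(Complex.I*n*θ))))) 0 := by
    rw [MeasureTheory.L2.inner_def, fourierCoeff_zero_eq]
    apply MeasureTheory.integral_congr_ae
    filter_upwards [ContinuousMap.coeFn_toLp (p := 2) haarAddCircle (𝕜 := ℂ) (FX r),
      ContinuousMap.coeFn_toLp (p := 2) haarAddCircle (𝕜 := ℂ) (FY r n)] with x hx hy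
    rw [show ((inner ℂ (X x) (Y x)) : ℂ) = (starRingEnd ℂ) (X x) * Y x from RCLike.inner_apply' _ _]
    rw [hx, hy, lift_inner_pt]
  constructor
  · have hs := fourierBasis.summable_inner_mul_inner X Y
    apply Summable.congr hs
    intro i
    rw [h1, h2]
  · have ht := fourierBasis.tsum_inner_mul_inner X Y
    rw [← h3, ← ht]
    apply tsum_congr
    intro i
    rw [h1, h2]

lemma cos23 : Real.cos (2*π/3) = -(1/2) := by
  rw [show 2*π/3 = π - π/3 by ring, Real.cos_pi_sub, Real.cos_pi_div_three]

lemma sin23 : Real.sin (2*π/3) = Real.sqrt 3 / 2 := by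
  rw [show 2*π/3 = π - π/3 by ring, Real.sin_pi_sub, Real.sin_pi_div_three]

lemma trig1 (θ : ℝ) : Real.cos (θ+0) + Real.cos (θ+2*π/3) = Real.cos (θ+π/3) := by
  rw [add_zero, Real.cos_add, Real.cos_add, cos23, sin23,
    Real.cos_pi_div_three, Real.sin_pi_div_three]
  ring

lemma trig2 (θ : ℝ) : Real.cos (θ+0) + Real.cos (θ+(-(2*π/3))) = Real.cos (θ+(-(π/3))) := by
  rw [add_zero, Real.cos_add, Real.cos_add, Real.cos_neg, Real.cos_neg, Real.sin_neg,
    Real.sin_neg, cos23, sin23, Real.cos_pi_div_three, Real.sin_pi_div_three]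
  ring

lemma trig3 (θ : ℝ) : Real.cos (θ+2*π/3) + Real.cos (θ+(-(2*π/3))) = Real.cos (θ+π) := by
  rw [Real.cos_add, Real.cos_add, Real.cos_add, Real.cos_neg, Real.sin_neg, cos23, sin23,
    Real.cos_pi, Real.sin_pi]
  ring

lemma E_mul (s₁ s₂ s₃ φ₁ φ₂ φ₃ : ℝ) (θ : ℝ)
    (h : s₁ * Real.cos (θ+φ₁) + s₂ * Real.cos (θ+φ₂) = s₃ * Real.cos (θ+φ₃)) :
    E s₁ φ₁ θ * E s₂ φ₂ θ = E s₃ φ₃ θ := by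
  unfold E
  rw [← Complex.exp_add, ← mul_add, ← Complex.ofReal_add, h]

lemma fsq (r : ℝ) (θ : ℝ) :
    f r θ * f r θ
      = (1/9:ℂ) * E (2*r) 0 θ + (1/9:ℂ) * E (2*r) (2*π/3) θ + (1/9:ℂ) * E (2*r) (-(2*π/3)) θ
        - (2/9:ℂ) * E r (π/3) θ - (2/9:ℂ) * E r (-(π/3)) θ + (2/9:ℂ) * E r π θ := by
  have hp1 : E r 0 θ * E r 0 θ = E (2*r) 0 θ := E_mul _ _ _ _ _ _ _ (by ring)
  have hp2 : E r (2*π/3) θ * E r (2*π/3) θ = E (2*r) (2*π/3) θ := E_mul _ _ _ _ _ _ _ (by ring)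
  have hp3 : E r (-(2*π/3)) θ * E r (-(2*π/3)) θ = E (2*r) (-(2*π/3)) θ :=
    E_mul _ _ _ _ _ _ _ (by ring)
  have hp4 : E r 0 θ * E r (2*π/3) θ = E r (π/3) θ :=
    E_mul _ _ _ _ _ _ _ (by linear_combination r * trig1 θ)
  have hp5 : E r 0 θ * E r (-(2*π/3)) θ = E r (-(π/3)) θ :=
    E_mul _ _ _ _ _ _ _ (by linear_combination r * trig2 θ)
  have hp6 : E r (2*π/3) θ * E r (-(2*π/3)) θ = E r π θ :=
    E_mul _ _ _ _ _ _ _ (by linear_combination r * trig3 θ)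
  unfold f
  linear_combination (1/9:ℂ)*hp1 + (1/9:ℂ)*hp2 + (1/9:ℂ)*hp3 - (2/9:ℂ)*hp4 - (2/9:ℂ)*hp5
    + (2/9:ℂ)*hp6

lemma exp_pi_n (n : ℤ) : Complex.exp (Complex.I*(n:ℂ)*((π:ℝ):ℂ)) = (-1:ℂ)^n := by
  rw [exp_int_pi n]
  congr 1
  ring

lemma fc_fsq (r : ℝ) (n : ℤ) :
    fourierCoeff (AddCircle.liftIco (2*π) 0
        (fun θ => f r θ * (f r θ * Complex.exp (-(Complex.I*n*θ))))) 0
      = Complex.I^n * ((1/9) * (1 + 2*((Real.cos ((n:ℝ)*(2*π/3)) : ℝ):ℂ))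
            * ((besselJ n (2*r) : ℝ):ℂ)
          + (1/9) * (2*(-1:ℂ)^n - 4*((Real.cos ((n:ℝ)*(π/3)) : ℝ):ℂ))
            * ((besselJ n r : ℝ):ℂ)) := by
  have hfn : (fun θ => f r θ * (f r θ * Complex.exp (-(Complex.I*n*θ))))
      = fun θ => (f r θ * f r θ) * Complex.exp (-(Complex.I*n*θ)) := by
    funext θ; ring
  rw [hfn, fc_mul_exp (fun θ => f r θ * f r θ) n 0, add_zero, fc]
  have hpt : ∀ θ ∈ Set.uIcc (0:ℝ) (2*π),
      Complex.exp (-(Complex.I*n*θ)) * (f r θ * f r θ)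
        = (1/9:ℂ) * g (2*r) 0 n θ + (1/9:ℂ) * g (2*r) (2*π/3) n θ
          + (1/9:ℂ) * g (2*r) (-(2*π/3)) n θ - (2/9:ℂ) * g r (π/3) n θ
          - (2/9:ℂ) * g r (-(π/3)) n θ + (2/9:ℂ) * g r π n θ := by
    intro θ _
    have h := fsq r θ
    have e1 := exp_mul_E (2*r) 0 n θ
    have e2 := exp_mul_E (2*r) (2*π/3) n θ
    have e3 := exp_mul_E (2*r) (-(2*π/3)) n θ
    have e4 := exp_mul_E r (π/3) n θ
    have e5 := exp_mul_E r (-(π/3)) n θ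
    have e6 := exp_mul_E r π n θ
    linear_combination Complex.exp (-(Complex.I*n*θ)) * h + (1/9:ℂ)*e1 + (1/9:ℂ)*e2
      + (1/9:ℂ)*e3 - (2/9:ℂ)*e4 - (2/9:ℂ)*e5 + (2/9:ℂ)*e6
  rw [intervalIntegral.integral_congr hpt]
  have i1 := (integrable_g (2*r) 0 n 0 (2*π)).const_mul (1/9:ℂ)
  have i2 := (integrable_g (2*r) (2*π/3) n 0 (2*π)).const_mul (1/9:ℂ)
  have i3 := (integrable_g (2*r) (-(2*π/3)) n 0 (2*π)).const_mul (1/9:ℂ)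
  have i4 := (integrable_g r (π/3) n 0 (2*π)).const_mul (2/9:ℂ)
  have i5 := (integrable_g r (-(π/3)) n 0 (2*π)).const_mul (2/9:ℂ)
  have i6 := (integrable_g r π n 0 (2*π)).const_mul (2/9:ℂ)
  rw [intervalIntegral.integral_add ((((i1.add i2).add i3).sub i4).sub i5) i6,
      intervalIntegral.integral_sub (((i1.add i2).add i3).sub i4) i5,
      intervalIntegral.integral_sub ((i1.add i2).add i3) i4,
      intervalIntegral.integral_add (i1.add i2) i3,
      intervalIntegral.integral_add i1 i2,
      intervalIntegral.integral_const_mul, intervalIntegral.integral_const_mul,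
      intervalIntegral.integral_const_mul, intervalIntegral.integral_const_mul,
      intervalIntegral.integral_const_mul, intervalIntegral.integral_const_mul]
  have h1 : (∫ θ in (0:ℝ)..(2*π), g (2*r) 0 n θ) = c (2*r) 0 n := rfl
  have h2 : (∫ θ in (0:ℝ)..(2*π), g (2*r) (2*π/3) n θ) = c (2*r) (2*π/3) n := rfl
  have h3 : (∫ θ in (0:ℝ)..(2*π), g (2*r) (-(2*π/3)) n θ) = c (2*r) (-(2*π/3)) n := rfl
  have h4 : (∫ θ in (0:ℝ)..(2*π), g r (π/3) n θ) = c r (π/3) n := rfl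
  have h5 : (∫ θ in (0:ℝ)..(2*π), g r (-(π/3)) n θ) = c r (-(π/3)) n := rfl
  have h6 : (∫ θ in (0:ℝ)..(2*π), g r π n θ) = c r π n := rfl
  rw [h1, h2, h3, h4, h5, h6,
      c_shift (2*r) (2*π/3) n, c_shift (2*r) (-(2*π/3)) n, c_shift r (π/3) n,
      c_shift r (-(π/3)) n, c_shift r π n, c_eq n (2*r), c_eq n r]
  have hpair1 := exp_pair n (2*π/3)
  have hpair2 := exp_pair n (π/3)
  have hexp := exp_pi_n n
  rw [inv_mul_eq_iff_eq_mul₀ two_pi_ne]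
  linear_combination ((2*(π:ℂ)*Complex.I^n*((besselJ n (2*r) : ℝ):ℂ))/9) * hpair1
    - (2*(2*(π:ℂ)*Complex.I^n*((besselJ n r : ℝ):ℂ))/9) * hpair2
    + (2*(2*(π:ℂ)*Complex.I^n*((besselJ n r : ℝ):ℂ))/9) * hexp

lemma cos_int_pi (m : ℤ) : Real.cos ((m:ℝ)*π) = (-1:ℝ)^m := by
  rcases Int.even_or_odd m with ⟨k, hk⟩ | ⟨k, hk⟩
  · subst hk
    rw [show (((k+k : ℤ)):ℝ)*π = (k:ℝ)*(2*π) by push_cast; ring, Real.cos_int_mul_two_pi]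
    rw [show (k+k : ℤ) = 2*k by ring, zpow_mul]
    norm_num
  · subst hk
    rw [show (((2*k+1 : ℤ)):ℝ)*π = (k:ℝ)*(2*π) + π by push_cast; ring, Real.cos_add_pi,
      Real.cos_int_mul_two_pi]
    rw [zpow_add₀ (by norm_num : (-1:ℝ) ≠ 0), zpow_mul]
    norm_num

lemma cos_pi_third (n : ℤ) :
    Real.cos ((n:ℝ)*(π/3)) = (-1:ℝ)^n * Real.cos ((n:ℝ)*(2*π/3)) := by
  rw [show (n:ℝ)*(π/3) = (n:ℝ)*π - (n:ℝ)*(2*π/3) by ring, Real.cos_sub,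
    Real.sin_int_mul_pi, cos_int_pi]
  ring

end RhombicAux


/-- Rhombic quadratic identity. -/
theorem rhombic_quadratic_one (n : ℤ) (r : ℝ) :
    Summable (fun i : ℤ =>
      rhombCoeff i * rhombCoeff (n - i) * besselJ i r * besselJ (n - i) r) ∧
    (∑' i : ℤ, rhombCoeff i * rhombCoeff (n - i) * besselJ i r * besselJ (n - i) r)
      = 2/3 * rhombCoeff n * besselJ (-n) r
        + 1/9 * (1 + 2 * Real.cos (2 * (n : ℝ) * Real.pi / 3)) * besselJ n (2 * r) := by
  classical
  have hIn : (Complex.I)^n ≠ 0 := zpow_ne_zero n Complex.I_ne_zero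
  obtain ⟨hsum, htsum⟩ := RhombicAux.conv r n
  set u : ℤ → ℝ := fun i =>
    rhombCoeff i * rhombCoeff (n - i) * besselJ i r * besselJ (n - i) r with hu
  have hterm : ∀ j : ℤ,
      fourierCoeff (AddCircle.liftIco (2*Real.pi) 0 (RhombicAux.f r)) (-(-j))
        * fourierCoeff (AddCircle.liftIco (2*Real.pi) 0 (RhombicAux.f r)) (n+(-j))
      = Complex.I^n * ((u j : ℝ) : ℂ) := by
    intro j
    rw [neg_neg, show n + (-j) = n - j by ring, RhombicAux.fc_f, RhombicAux.fc_f]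
    have hz : Complex.I^j * Complex.I^(n-j) = Complex.I^n := by
      rw [← zpow_add₀ Complex.I_ne_zero]
      congr 1
      ring
    rw [hu]
    push_cast
    linear_combination (((rhombCoeff j : ℝ):ℂ) * ((rhombCoeff (n-j) : ℝ):ℂ)
      * ((besselJ j r : ℝ):ℂ) * ((besselJ (n-j) r : ℝ):ℂ)) * hz
  have hS : Summable (fun j : ℤ => Complex.I^n * ((u j : ℝ):ℂ)) := by
    have h0 := ((Equiv.neg ℤ).summable_iff
      (f := fun i => fourierCoeff (AddCircle.liftIco (2*Real.pi) 0 (RhombicAux.f r)) (-i)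
        * fourierCoeff (AddCircle.liftIco (2*Real.pi) 0 (RhombicAux.f r)) (n+i))).mpr hsum
    apply Summable.congr h0
    intro j
    simpa using hterm j
  have hsummable_u : Summable u := by
    have h2 := hS.mul_left ((Complex.I^n)⁻¹)
    have h3 : (fun j => (Complex.I^n)⁻¹ * (Complex.I^n * ((u j : ℝ):ℂ)))
        = fun j => ((u j : ℝ):ℂ) := by
      funext j
      rw [← mul_assoc, inv_mul_cancel₀ hIn, one_mul]
    rw [h3] at h2
    exact Complex.summable_ofReal.mp h2
  refine ⟨hsummable_u, ?_⟩
  have ht1 : (∑' j : ℤ, Complex.I^n * ((u j : ℝ):ℂ))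
      = fourierCoeff (AddCircle.liftIco (2*Real.pi) 0
          (fun θ => RhombicAux.f r θ * (RhombicAux.f r θ
            * Complex.exp (-(Complex.I*n*θ))))) 0 := by
    rw [← htsum, ← (Equiv.neg ℤ).tsum_eq
      (fun i => fourierCoeff (AddCircle.liftIco (2*Real.pi) 0 (RhombicAux.f r)) (-i)
        * fourierCoeff (AddCircle.liftIco (2*Real.pi) 0 (RhombicAux.f r)) (n+i))]
    apply tsum_congr
    intro j
    simpa using (hterm j).symm
  rw [tsum_mul_left, RhombicAux.fc_fsq] at ht1
  have ht2 := mul_left_cancel₀ hIn ht1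
  rw [← Complex.ofReal_tsum] at ht2
  apply Complex.ofReal_injective
  rw [ht2]
  have hc1 := RhombicAux.cos_pi_third n
  have hbn := RhombicAux.besselJ_neg n r
  have hrc : rhombCoeff n = 1/3 * (1 - 2 * Real.cos ((n:ℝ)*(2*Real.pi/3))) := by
    unfold rhombCoeff
    rw [show (n:ℝ)*(2*Real.pi/3) = 2*(n:ℝ)*Real.pi/3 by ring]
  have hcos : Real.cos (2*(n:ℝ)*Real.pi/3) = Real.cos ((n:ℝ)*(2*Real.pi/3)) := by
    rw [show (n:ℝ)*(2*Real.pi/3) = 2*(n:ℝ)*Real.pi/3 by ring]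
  push_cast [hbn, hrc, hcos, hc1]
  ring
end
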